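/- arXiv:1603.02884 — 3 statements merged into one kernel-verified Lean document; each statement's English description precedes it below -/
import Mathlib

section
/- Let A ⊆ B be discrete valuation rings with uniformisers π_A and π_B respectively, and suppose that π_A = u·π_B^f in B for some unit u of B and some integer f ≥ 1 (i.e., f is the ramification index of the extension). Let n ≥ 1 and e_A ≥ 1 be integers and set e_B = f·e_A. Then the inclusion A ↪ B induces a well-defined injective ring homomorphism A/(π_A^{e_A(n−1)+1}) → B/(π_B^{e_B(n−1)+1}). -/
/-- Let `A ⊆ B` be discrete valuation rings with uniformisers `πA`, `πB`,
and `πA = u·πB^f` with `u` a unit of `B` and `f ≥ 1` (the ramification index). Let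
`n ≥ 1`, `eA ≥ 1` and `eB = f·eA`. Then the inclusion `A ↪ B` induces a well-defined
injective ring homomorphism `A/(πA^{eA(n−1)+1}) → B/(πB^{eB(n−1)+1})`. -/
theorem stmt_1 (A B : Type*) [CommRing A] [IsDomain A] [IsDiscreteValuationRing A]
    [CommRing B] [IsDomain B] [IsDiscreteValuationRing B]
    [Algebra A B] (hinj : Function.Injective (algebraMap A B))
    (πA : A) (hπA : Irreducible πA) (πB : B) (hπB : Irreducible πB)
    (f : ℕ) (hf : 1 ≤ f) (u : B) (hu : IsUnit u)
    (hram : algebraMap A B πA = u * πB ^ f)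
    (n eA eB : ℕ) (hn : 1 ≤ n) (heA : 1 ≤ eA) (heB : eB = f * eA) :
    ∃ g : A ⧸ Ideal.span {πA ^ (eA * (n - 1) + 1)} →+*
          B ⧸ Ideal.span {πB ^ (eB * (n - 1) + 1)},
      Function.Injective g ∧
      ∀ x : A, g (Ideal.Quotient.mk _ x) = Ideal.Quotient.mk _ (algebraMap A B x) := by
  set k := eA * (n - 1) + 1 with hk
  set m := eB * (n - 1) + 1 with hm
  have hπB0 : πB ≠ 0 := hπB.ne_zero
  have hπBnu : ¬IsUnit πB := hπB.not_isUnit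
  have hmk : m ≤ f * k := by
    have : f * (eA * (n - 1) + 1) = f * eA * (n - 1) + f := by ring
    rw [hm, hk, heB, this]
    omega
  -- forward divisibility
  have hfwd : ∀ x : A, πA ^ k ∣ x → πB ^ m ∣ algebraMap A B x := by
    rintro x ⟨c, hc⟩
    have : algebraMap A B x = (u ^ k * algebraMap A B c) * πB ^ (f * k) := by
      rw [hc, map_mul, map_pow, hram, mul_pow, ← pow_mul]
      ring
    rw [this]
    exact Dvd.dvd.mul_left (pow_dvd_pow _ hmk) _
  -- backward divisibility
  have hbwd : ∀ x : A, πB ^ m ∣ algebraMap A B x → πA ^ k ∣ x := by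
    intro x hx
    rcases eq_or_ne x 0 with rfl | hx0
    · exact dvd_zero _
    obtain ⟨t, w, hw⟩ := IsDiscreteValuationRing.eq_unit_mul_pow_irreducible hx0 hπA
    have hxB : algebraMap A B x = ((algebraMap A B ↑w) * u ^ t) * πB ^ (f * t) := by
      rw [hw, map_mul, map_pow, hram, mul_pow, ← pow_mul]
      ring
    have hunit : IsUnit ((algebraMap A B ↑w) * u ^ t) :=
      ((w.isUnit).map (algebraMap A B)).mul (hu.pow t)
    rw [hxB, hunit.dvd_mul_left] at hx
    have hle : m ≤ f * t := (pow_dvd_pow_iff hπB0 hπBnu).mp hx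
    have hlt : f * (eA * (n - 1)) < f * t := by
      have : eB * (n - 1) = f * (eA * (n - 1)) := by rw [heB]; ring
      omega
    have ht : k ≤ t := Nat.lt_of_mul_lt_mul_left hlt
    rw [hw]
    exact Dvd.dvd.mul_left (pow_dvd_pow _ ht) _
  -- construct the lift
  have hzero : ∀ a ∈ Ideal.span {πA ^ k},
      (Ideal.Quotient.mk (Ideal.span {πB ^ m})).comp (algebraMap A B) a = 0 := by
    intro a ha
    rw [Ideal.mem_span_singleton] at ha
    simp only [RingHom.comp_apply]
    rw [Ideal.Quotient.eq_zero_iff_mem, Ideal.mem_span_singleton]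
    exact hfwd a ha
  refine ⟨Ideal.Quotient.lift _ _ hzero, ?_, fun x => rfl⟩
  rw [injective_iff_map_eq_zero]
  intro a ha
  obtain ⟨x, rfl⟩ := Ideal.Quotient.mk_surjective a
  rw [Ideal.Quotient.lift_mk, RingHom.comp_apply, Ideal.Quotient.eq_zero_iff_mem,
    Ideal.mem_span_singleton] at ha
  rw [Ideal.Quotient.eq_zero_iff_mem, Ideal.mem_span_singleton]
  exact hbwd x ha
end

section
/- Let O be a discrete valuation ring with uniformiser π, let R be a commutative O-algebra, let S be an O-submodule of the formal power series ring O[[q]], and define the saturation D := { f ∈ O[[q]] : there exists an integer t ≥ 0 such that π^t·f ∈ S }. Then the natural R-linear map D ⊗_O R → R[[q]], induced by applying the coefficient-wise base change map O[[q]] → R[[q]] on the first factor, is injective. Consequently, D ⊗_O R is isomorphic as an R-module to the R-submodule of R[[q]] generated by the image of D under the map O[[q]] → R[[q]]. -/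
open TensorProduct

set_option maxHeartbeats 1000000
set_option synthInstance.maxHeartbeats 400000

theorem lemA' {O : Type*} [CommRing O] [IsDomain O] :
    ∀ {n : ℕ} (F : Fin n → ℕ → O), LinearIndependent O F →
    ∃ k : Fin n → ℕ, (Matrix.of fun i j => F i (k j)).det ≠ 0 := by
  intro n
  induction n with
  | zero =>
    intro F _
    exact ⟨Fin.elim0, by simp [Matrix.det_fin_zero]⟩
  | succ n ih =>
    intro F hF
    obtain ⟨k, hk⟩ := ih (fun i => F i.castSucc)
      (hF.comp Fin.castSucc (Fin.castSucc_injective n))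
    by_contra hc
    push_neg at hc
    -- every extension by a column c has determinant 0
    set e : Fin (n + 1) → O := fun i =>
      (-1) ^ ((i : ℕ) + n) *
        ((Matrix.of fun i' j' : Fin n => F (i.succAbove i') (k j')).det) with he
    have hrel : ∀ c : ℕ, ∑ i, e i * F i c = 0 := by
      intro c
      have h0 := hc (Fin.snoc k c)
      rw [Matrix.det_succ_column _ (Fin.last n)] at h0
      rw [← h0]
      apply Finset.sum_congr rfl
      intro i _
      have hsub : (Matrix.of fun i' j' => F i' ((Fin.snoc k c : Fin (n+1) → ℕ) j')).submatrix i.succAbove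
          (Fin.last n).succAbove = Matrix.of fun i' j' : Fin n => F (i.succAbove i') (k j') := by
        ext i' j'
        simp [Matrix.submatrix_apply, Fin.succAbove_last, Fin.snoc_castSucc]
      rw [hsub]
      simp only [Matrix.of_apply, Fin.snoc_last, he, Fin.val_last]
      ring
    have := Fintype.linearIndependent_iff.mp hF e ?_ (Fin.last n)
    · rw [he] at this
      simp only [Fin.val_last, Fin.succAbove_last] at this
      rcases mul_eq_zero.mp this with h | h
      · exact (pow_ne_zero _ (neg_ne_zero.mpr one_ne_zero)) h
      · exact hk h
    · funext c
      simpa [Finset.sum_apply] using hrel c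

section Main

variable {O : Type*} [CommRing O] [IsDomain O] [IsDiscreteValuationRing O]
  {R : Type*} [CommRing R] [Algebra O R]

/-- Coefficientwise base change as an `O`-linear map on power series. -/
noncomputable def mpL (O R : Type*) [CommRing O] [CommRing R] [Algebra O R] :
    PowerSeries O →ₗ[O] PowerSeries R where
  toFun := PowerSeries.map (algebraMap O R)
  map_add' := fun a b => map_add _ a b
  map_smul' := fun a f => by
    ext m
    rw [RingHom.id_apply]
    show PowerSeries.coeff m (PowerSeries.map (algebraMap O R) (a • f)) =
      PowerSeries.coeff m (a • PowerSeries.map (algebraMap O R) f)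
    rw [PowerSeries.coeff_map, PowerSeries.coeff_smul, PowerSeries.coeff_smul,
      PowerSeries.coeff_map, smul_eq_mul, map_mul, Algebra.smul_def]

theorem subst_sum {W M : Type*} [AddCommGroup W] [Module O W] [Module R W]
    [IsScalarTower O R W] [AddCommGroup M] [Module O M]
    {n : ℕ} (T : M →ₗ[O] W)
    (x : Fin n → M) (j : Fin n) (c : Fin n → O) (v : Oˣ) (hv : (v : O) = c j)
    (p : O) (y : M) (hy : p • y = ∑ i, c i • x i) (r : Fin n → R) :
    ∑ i, r i • T (x i) =
      ∑ i, (if i = j then algebraMap O R ((↑v⁻¹ : O) * p) * r j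
            else r i - algebraMap O R ((↑v⁻¹ : O) * c i) * r j) •
          T (Function.update x j y i) := by
  have hsm : ∀ (a : O) (s : R) (w : W), (algebraMap O R a * s) • w = a • (s • w) := by
    intro a s w; rw [mul_smul, algebraMap_smul]
  have hcomm : ∀ (a : O) (s : R) (w : W), a • (s • w) = s • (a • w) := by
    intro a s w
    rw [← algebraMap_smul R a w, ← algebraMap_smul R a (s • w), smul_smul, smul_smul, mul_comm]
  have h1 : p • T y = ∑ i, c i • T (x i) := by
    rw [← map_smul, hy, map_sum]; simp only [map_smul]
  have h2 : ((↑v⁻¹ * p : O)) • (r j • T y) =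
      ∑ i, ((↑v⁻¹ * c i : O)) • (r j • T (x i)) := by
    calc ((↑v⁻¹ * p : O)) • (r j • T y) = (↑v⁻¹ : O) • (r j • (p • T y)) := by
          rw [mul_smul, hcomm p (r j) (T y)]
      _ = (↑v⁻¹ : O) • (r j • ∑ i, c i • T (x i)) := by rw [h1]
      _ = ∑ i, ((↑v⁻¹ * c i : O)) • (r j • T (x i)) := by
          rw [Finset.smul_sum, Finset.smul_sum]
          refine Finset.sum_congr rfl fun i _ => ?_
          rw [mul_smul, hcomm (c i) (r j) (T (x i))]
  rw [← Finset.add_sum_erase _ (fun i => r i • T (x i)) (Finset.mem_univ j),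
      ← Finset.add_sum_erase _ _ (Finset.mem_univ j)]
  rw [if_pos rfl, Function.update_self]
  have herase : ∀ i ∈ Finset.univ.erase j,
      (if i = j then algebraMap O R ((↑v⁻¹ : O) * p) * r j
        else r i - algebraMap O R ((↑v⁻¹ : O) * c i) * r j) • T (Function.update x j y i)
      = r i • T (x i) - ((↑v⁻¹ * c i : O)) • (r j • T (x i)) := by
    intro i hi
    have hij : i ≠ j := Finset.ne_of_mem_erase hi
    rw [if_neg hij, Function.update_of_ne hij, sub_smul, hsm]
  rw [Finset.sum_congr rfl herase, Finset.sum_sub_distrib, hsm]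
  have h3 : ∑ i, ((↑v⁻¹ * c i : O)) • (r j • T (x i))
      = ((↑v⁻¹ * c j : O)) • (r j • T (x j))
        + ∑ i ∈ Finset.univ.erase j, ((↑v⁻¹ * c i : O)) • (r j • T (x i)) :=
    (Finset.add_sum_erase _ _ (Finset.mem_univ j)).symm
  rw [h2, h3]
  have hval : ((↑v⁻¹ * c j : O)) • (r j • T (x j)) = r j • T (x j) := by
    rw [← hv, Units.inv_mul, one_smul]
  rw [hval]
  abel


theorem key {S D : Submodule O (PowerSeries O)} {π : O} (hπ : Irreducible π)
    (hD : ∀ f : PowerSeries O, f ∈ D ↔ ∃ t : ℕ, π ^ t • f ∈ S) :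
    ∀ (t : ℕ) {n : ℕ} (f : Fin n → PowerSeries O) (hf : ∀ i, f i ∈ D) (k : Fin n → ℕ),
      ¬ (π ^ t ∣ (Matrix.of fun i j => PowerSeries.coeff (k j) (f i)).det) →
      ∀ r : Fin n → R,
        ∑ i, r i • PowerSeries.map (algebraMap O R) (f i) = 0 →
        ∑ i, r i ⊗ₜ[O] (⟨f i, hf i⟩ : D) = 0 := by
  intro t
  induction t with
  | zero =>
    intro n f hf k hdet
    rw [pow_zero] at hdet
    exact absurd (one_dvd _) hdet
  | succ t ih =>
    intro n f hf k hdet r hrel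
    by_cases hres : LinearIndependent (IsLocalRing.ResidueField O)
        (fun i (m : ℕ) => IsLocalRing.residue O (PowerSeries.coeff m (f i)))
    · -- the rows are independent modulo the maximal ideal: a unit minor exists
      obtain ⟨k', hk'⟩ := lemA' _ hres
      have hdetres : IsLocalRing.residue O
          (Matrix.of fun i j => PowerSeries.coeff (k' j) (f i)).det ≠ 0 := by
        rw [RingHom.map_det]
        convert hk' using 2
        rfl
      have hdetunit : IsUnit (Matrix.of fun i j => PowerSeries.coeff (k' j) (f i)).det :=
        (IsLocalRing.residue_ne_zero_iff_isUnit _).mp hdetres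
      set B : Matrix (Fin n) (Fin n) R :=
        ((Matrix.of fun i j => PowerSeries.coeff (k' j) (f i)).map (algebraMap O R)) with hB
      have hdetB : IsUnit B.det := by
        rw [hB, ← RingHom.mapMatrix_apply, ← RingHom.map_det]
        exact hdetunit.map (algebraMap O R)
      have hcoeffrel : ∀ m : ℕ, ∑ i, r i * algebraMap O R (PowerSeries.coeff m (f i)) = 0 := by
        intro m
        have h0 := congrArg (PowerSeries.coeff m) hrel
        simpa [map_sum, map_smul, smul_eq_mul, PowerSeries.coeff_map] using h0
      have hvec : Matrix.vecMul r B = 0 := by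
        funext j'
        simpa [Matrix.vecMul, dotProduct, hB] using hcoeffrel (k' j')
      have hr : r = 0 := by
        have h1 := congrArg (fun v => Matrix.vecMul v B⁻¹) hvec
        simpa [Matrix.vecMul_vecMul, Matrix.mul_nonsing_inv B hdetB] using h1
      rw [hr]
      simp
    · -- the rows are dependent modulo the maximal ideal
      obtain ⟨cbar, hcbar0, j, hcbarj⟩ := Fintype.not_linearIndependent_iff.mp hres
      choose c hc using fun i => IsLocalRing.residue_surjective (R := O) (cbar i)
      have hressum : ∀ m : ℕ, π ∣ ∑ i, c i * PowerSeries.coeff m (f i) := by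
        intro m
        rw [← Ideal.mem_span_singleton, ← hπ.maximalIdeal_eq,
          ← IsLocalRing.residue_eq_zero_iff]
        have h0 := congrFun hcbar0 m
        simp only [Finset.sum_apply, Pi.smul_apply, smul_eq_mul, Pi.zero_apply] at h0
        rw [map_sum]
        simp only [map_mul, hc]
        exact h0
      choose b hb using hressum
      set h : PowerSeries O := PowerSeries.mk b with hdefh
      have hπh : π • h = ∑ i, c i • f i := by
        ext m
        rw [PowerSeries.coeff_smul, hdefh, PowerSeries.coeff_mk, smul_eq_mul, ← hb m, map_sum]
        simp [PowerSeries.coeff_smul, smul_eq_mul]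
      have hhD : h ∈ D := by
        have hsumD : (∑ i, c i • f i) ∈ D :=
          Submodule.sum_mem _ fun i _ => Submodule.smul_mem _ _ (hf i)
        have hπhD : π • h ∈ D := hπh ▸ hsumD
        obtain ⟨t', ht'⟩ := (hD _).mp hπhD
        exact (hD h).mpr ⟨t' + 1, by rw [pow_succ, mul_smul]; exact ht'⟩
      have hcju : IsUnit (c j) := by
        rw [← IsLocalRing.residue_ne_zero_iff_isUnit, hc j]
        exact hcbarj
      obtain ⟨v, hv⟩ := hcju
      set f' : Fin n → PowerSeries O := Function.update f j h with hdeff'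
      have hf' : ∀ i, f' i ∈ D := by
        intro i
        rcases eq_or_ne i j with rfl | hij
        · simpa [hdeff', Function.update_self] using hhD
        · simpa [hdeff', Function.update_of_ne hij] using hf i
      -- determinant bookkeeping
      set M : Matrix (Fin n) (Fin n) O :=
        Matrix.of fun i j' => PowerSeries.coeff (k j') (f i) with hM
      have hπN : π * (Matrix.of fun i j' => PowerSeries.coeff (k j') (f' i)).det
          = c j * M.det := by
        have hNu : (Matrix.of fun i j' => PowerSeries.coeff (k j') (f' i))
            = M.updateRow j (fun j' => PowerSeries.coeff (k j') h) := by
          ext i j'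
          rw [Matrix.updateRow_apply]
          rcases eq_or_ne i j with rfl | hij
          · simp [hdeff', Function.update_self]
          · simp [hdeff', Function.update_of_ne hij, hM, hij]
        have hrow : (π • fun j' => PowerSeries.coeff (k j') h) = ∑ i, c i • M i := by
          funext j'
          have h1 := congrArg (PowerSeries.coeff (k j')) hπh
          rw [PowerSeries.coeff_smul, map_sum] at h1
          simp only [PowerSeries.coeff_smul, smul_eq_mul] at h1
          simpa [Finset.sum_apply, Pi.smul_apply, smul_eq_mul, hM] using h1
        calc π * (Matrix.of fun i j' => PowerSeries.coeff (k j') (f' i)).det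
            = π * (M.updateRow j fun j' => PowerSeries.coeff (k j') h).det := by rw [hNu]
          _ = (M.updateRow j (π • fun j' => PowerSeries.coeff (k j') h)).det := by
              rw [Matrix.det_updateRow_smul]
          _ = (M.updateRow j (∑ i, c i • M i)).det := by rw [hrow]
          _ = c j • M.det := Matrix.det_updateRow_sum M j c
          _ = c j * M.det := by rw [smul_eq_mul]
      have hdet' : ¬ (π ^ t ∣ (Matrix.of fun i j' => PowerSeries.coeff (k j') (f' i)).det) := by
        rintro ⟨e, he⟩
        apply hdet
        refine ⟨(↑v⁻¹ : O) * e, ?_⟩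
        have hMdet : M.det = (↑v⁻¹ : O) * (c j * M.det) := by
          rw [← hv, ← mul_assoc, Units.inv_mul, one_mul]
        calc M.det = (↑v⁻¹ : O) * (c j * M.det) := hMdet
          _ = (↑v⁻¹ : O) * (π * (Matrix.of fun i j' =>
              PowerSeries.coeff (k j') (f' i)).det) := by rw [hπN]
          _ = (↑v⁻¹ : O) * (π * (π ^ t * e)) := by rw [he]
          _ = π ^ (t + 1) * ((↑v⁻¹ : O) * e) := by ring
      -- substitution data
      set x : Fin n → D := fun i => ⟨f i, hf i⟩ with hdefx
      set y : D := ⟨h, hhD⟩ with hdefy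
      have hy : π • y = ∑ i, c i • x i := by
        apply Subtype.ext
        calc ((π • y : D) : PowerSeries O) = π • h := rfl
          _ = ∑ i, c i • f i := hπh
          _ = ((∑ i, c i • x i : D) : PowerSeries O) := by
              rw [show ((∑ i, c i • x i : D) : PowerSeries O) = D.subtype (∑ i, c i • x i)
                from rfl, map_sum]
              simp [hdefx]
      have hupd : ∀ i, ((Function.update x j y i : D) : PowerSeries O) = f' i := by
        intro i
        rcases eq_or_ne i j with rfl | hij
        · simp [Function.update_self, hdeff', hdefy]
        · simp [Function.update_of_ne hij, hdeff', hdefx, hij]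
      set r' : Fin n → R := fun i =>
        if i = j then algebraMap O R ((↑v⁻¹ : O) * π) * r j
        else r i - algebraMap O R ((↑v⁻¹ : O) * c i) * r j with hdefr'
      have hrel' : ∑ i, r' i • PowerSeries.map (algebraMap O R) (f' i) = 0 := by
        have hsub := subst_sum (R := R) ((mpL O R).comp D.subtype) x j c v hv π y hy r
        calc ∑ i, r' i • PowerSeries.map (algebraMap O R) (f' i)
            = ∑ i, r' i • ((mpL O R).comp D.subtype) (Function.update x j y i) := by
              refine Finset.sum_congr rfl fun i _ => ?_
              rw [show ((mpL O R).comp D.subtype) (Function.update x j y i)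
                = PowerSeries.map (algebraMap O R) ((Function.update x j y i : D) : PowerSeries O)
                from rfl, hupd i]
          _ = ∑ i, r i • ((mpL O R).comp D.subtype) (x i) := hsub.symm
          _ = 0 := by exact hrel
      have hconc := ih f' hf' k hdet' r' hrel'
      have htm : ∀ (s : R) (d : D), s • ((1 : R) ⊗ₜ[O] d) = s ⊗ₜ[O] d := by
        intro s d
        rw [TensorProduct.smul_tmul', smul_eq_mul, mul_one]
      have hsubT := subst_sum (R := R) (W := R ⊗[O] D) ((TensorProduct.mk O R D) 1) x j c v hv π y hy r
      calc ∑ i, r i ⊗ₜ[O] (⟨f i, hf i⟩ : D)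
          = ∑ i, r i • ((TensorProduct.mk O R D) 1 (x i)) := by
            refine Finset.sum_congr rfl fun i _ => ?_
            rw [TensorProduct.mk_apply, htm, hdefx]
        _ = ∑ i, r' i • ((TensorProduct.mk O R D) 1 (Function.update x j y i)) := hsubT
        _ = ∑ i, r' i ⊗ₜ[O] (⟨f' i, hf' i⟩ : D) := by
            refine Finset.sum_congr rfl fun i _ => ?_
            rw [TensorProduct.mk_apply, htm]
            congr 1
            exact Subtype.ext (hupd i)
        _ = 0 := hconc


theorem key2 {S D : Submodule O (PowerSeries O)} {π : O} (hπ : Irreducible π)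
    (hD : ∀ f : PowerSeries O, f ∈ D ↔ ∃ t : ℕ, π ^ t • f ∈ S) :
    ∀ (n : ℕ) (f : Fin n → PowerSeries O) (hf : ∀ i, f i ∈ D) (r : Fin n → R),
      ∑ i, r i • PowerSeries.map (algebraMap O R) (f i) = 0 →
      ∑ i, r i ⊗ₜ[O] (⟨f i, hf i⟩ : D) = 0 := by
  intro n
  induction n with
  | zero => intro f hf r _; simp
  | succ n ih =>
    intro f hf r hrel
    by_cases hind : LinearIndependent O (fun i (m : ℕ) => PowerSeries.coeff m (f i))
    · obtain ⟨k, hk⟩ := lemA' _ hind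
      obtain ⟨m, u, hu⟩ := IsDiscreteValuationRing.eq_unit_mul_pow_irreducible hk hπ
      refine key hπ hD (m + 1) f hf k ?_ r hrel
      rintro ⟨e, he⟩
      have hπ0 : (π : O) ≠ 0 := hπ.ne_zero
      have hcancel : (u : O) = π * e := by
        have h1 : π ^ m * (u : O) = π ^ m * (π * e) := by
          rw [mul_comm (π ^ m) (u : O), ← hu, he]; ring
        exact mul_left_cancel₀ (pow_ne_zero m hπ0) h1
      have : IsUnit (π * e) := hcancel ▸ u.isUnit
      exact hπ.not_isUnit (isUnit_of_mul_isUnit_left this)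
    · obtain ⟨a, ha0, j, haj⟩ := Fintype.not_linearIndependent_iff.mp hind
      have hsum0 : ∑ i, a i • f i = 0 := by
        ext m
        have h0 := congrFun ha0 m
        simp only [Finset.sum_apply, Pi.smul_apply, smul_eq_mul, Pi.zero_apply] at h0
        rw [map_sum, map_zero]
        simpa [PowerSeries.coeff_smul, smul_eq_mul] using h0
      obtain ⟨g, hg⟩ := (IsPrincipalIdealRing.principal (Ideal.span (Set.range a))).principal
      have hdvd : ∀ i, g ∣ a i := fun i => by
        have hmem : a i ∈ Ideal.span (Set.range a) := Ideal.subset_span ⟨i, rfl⟩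
        rw [hg] at hmem
        exact Ideal.mem_span_singleton.mp hmem
      choose b hb using hdvd
      have hg0 : g ≠ 0 := by
        rintro rfl
        exact haj (by rw [hb j, zero_mul])
      obtain ⟨w, hw⟩ : ∃ w : Fin (n + 1) → O, ∑ i, w i * a i = g := by
        have hmem : g ∈ Ideal.span (Set.range a) := by
          rw [hg]; exact Ideal.mem_span_singleton_self g
        exact Ideal.mem_span_range_iff_exists_fun.mp hmem
      have hb1 : ∑ i, w i * b i = 1 := by
        apply mul_left_cancel₀ hg0
        rw [mul_one]
        calc g * ∑ i, w i * b i = ∑ i, w i * (g * b i) := by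
              rw [Finset.mul_sum]
              exact Finset.sum_congr rfl fun i _ => by ring
          _ = ∑ i, w i * a i := Finset.sum_congr rfl fun i _ => by rw [← hb i]
          _ = g := hw
      have hexu : ∃ j', IsUnit (b j') := by
        by_contra hnone
        push_neg at hnone
        have hmem1 : (1 : O) ∈ IsLocalRing.maximalIdeal O := by
          rw [← hb1]
          exact Ideal.sum_mem _ fun i _ => Ideal.mul_mem_left _ _
            ((IsLocalRing.mem_maximalIdeal _).mpr (mem_nonunits_iff.mpr (hnone i)))
        exact mem_nonunits_iff.mp ((IsLocalRing.mem_maximalIdeal _).mp hmem1) isUnit_one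
      obtain ⟨j', hbu⟩ := hexu
      obtain ⟨v, hv⟩ := hbu
      have hbsum : ∑ i, b i • f i = 0 := by
        have h1 : g • ∑ i, b i • f i = 0 := by
          rw [Finset.smul_sum, ← hsum0]
          refine Finset.sum_congr rfl fun i _ => ?_
          rw [smul_smul, ← hb i]
        ext m
        have h2 := congrArg (PowerSeries.coeff m) h1
        rw [PowerSeries.coeff_smul, smul_eq_mul, map_zero] at h2
        rw [map_zero]
        exact (mul_eq_zero.mp h2).resolve_left hg0
      set x : Fin (n + 1) → D := fun i => ⟨f i, hf i⟩ with hdefx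
      have hy : (0 : O) • (0 : D) = ∑ i, b i • x i := by
        apply Subtype.ext
        rw [zero_smul]
        calc ((0 : D) : PowerSeries O) = 0 := rfl
          _ = ∑ i, b i • f i := hbsum.symm
          _ = ((∑ i, b i • x i : D) : PowerSeries O) := by
            rw [show ((∑ i, b i • x i : D) : PowerSeries O) = D.subtype (∑ i, b i • x i)
              from rfl, map_sum]
            simp [hdefx]
      set r' : Fin (n + 1) → R := fun i =>
        if i = j' then algebraMap O R ((↑v⁻¹ : O) * 0) * r j'
        else r i - algebraMap O R ((↑v⁻¹ : O) * b i) * r j' with hdefr'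
      have hupd0 : ∀ i, ((Function.update x j' (0 : D) i : D) : PowerSeries O)
          = Function.update f j' 0 i := by
        intro i
        rcases eq_or_ne i j' with rfl | hij
        · simp
        · simp [Function.update_of_ne hij, hdefx]
      have hrel' : ∑ i, r' i • PowerSeries.map (algebraMap O R) (Function.update f j' 0 i)
          = 0 := by
        have hsub := subst_sum (R := R) ((mpL O R).comp D.subtype) x j' b v hv 0 0 hy r
        calc ∑ i, r' i • PowerSeries.map (algebraMap O R) (Function.update f j' 0 i)
            = ∑ i, r' i • ((mpL O R).comp D.subtype) (Function.update x j' 0 i) := by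
              refine Finset.sum_congr rfl fun i _ => ?_
              rw [show ((mpL O R).comp D.subtype) (Function.update x j' 0 i)
                = PowerSeries.map (algebraMap O R)
                  ((Function.update x j' 0 i : D) : PowerSeries O) from rfl, hupd0 i]
          _ = ∑ i, r i • ((mpL O R).comp D.subtype) (x i) := hsub.symm
          _ = 0 := by exact hrel
      have hrel2 : ∑ i : Fin n, r' (j'.succAbove i) •
          PowerSeries.map (algebraMap O R) (f (j'.succAbove i)) = 0 := by
        have h1 := hrel'
        rw [Fin.sum_univ_succAbove _ j', Function.update_self] at h1
        simp only [map_zero, smul_zero, zero_add] at h1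
        calc ∑ i : Fin n, r' (j'.succAbove i) •
              PowerSeries.map (algebraMap O R) (f (j'.succAbove i))
            = ∑ i : Fin n, r' (j'.succAbove i) • PowerSeries.map (algebraMap O R)
                (Function.update f j' 0 (j'.succAbove i)) := by
              refine Finset.sum_congr rfl fun i _ => ?_
              rw [Function.update_of_ne (Fin.succAbove_ne j' i)]
          _ = 0 := h1
      have hconc := ih (fun i => f (j'.succAbove i)) (fun i => hf _)
        (fun i => r' (j'.succAbove i)) hrel2
      have htm : ∀ (s : R) (d : D), s • ((1 : R) ⊗ₜ[O] d) = s ⊗ₜ[O] d := by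
        intro s d
        rw [TensorProduct.smul_tmul', smul_eq_mul, mul_one]
      have hsubT := subst_sum (R := R) (W := R ⊗[O] D)
        ((TensorProduct.mk O R D) 1) x j' b v hv 0 0 hy r
      calc ∑ i, r i ⊗ₜ[O] (⟨f i, hf i⟩ : D)
          = ∑ i, r i • ((TensorProduct.mk O R D) 1 (x i)) := by
            refine Finset.sum_congr rfl fun i _ => ?_
            rw [TensorProduct.mk_apply, htm, hdefx]
        _ = ∑ i, r' i • ((TensorProduct.mk O R D) 1 (Function.update x j' 0 i)) := hsubT
        _ = 0 := by
            rw [Fin.sum_univ_succAbove _ j', Function.update_self, TensorProduct.mk_apply,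
              TensorProduct.tmul_zero, smul_zero, zero_add]
            calc ∑ i : Fin n, r' (j'.succAbove i) •
                  ((TensorProduct.mk O R D) 1 (Function.update x j' 0 (j'.succAbove i)))
                = ∑ i : Fin n, r' (j'.succAbove i) ⊗ₜ[O]
                    (⟨f (j'.succAbove i), hf _⟩ : D) := by
                  refine Finset.sum_congr rfl fun i _ => ?_
                  rw [Function.update_of_ne (Fin.succAbove_ne j' i), TensorProduct.mk_apply, htm,
                    hdefx]
              _ = 0 := hconc

end Main


/-- Let `O` be a discrete valuation ring with uniformiser `π`, `R` a
commutative `O`-algebra, `S` an `O`-submodule of `O[[q]]`, and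
`D := {f ∈ O[[q]] : ∃ t ≥ 0, π^t·f ∈ S}` its saturation. Then the natural `R`-linear
map `D ⊗_O R → R[[q]]` (induced by coefficient-wise base change `O[[q]] → R[[q]]`) is
injective; consequently `D ⊗_O R` is isomorphic, via this map, to the `R`-submodule of
`R[[q]]` generated by the image of `D`. -/
theorem stmt_3 (O : Type*) [CommRing O] [IsDomain O] [IsDiscreteValuationRing O]
    (π : O) (hπ : Irreducible π)
    (R : Type*) [CommRing R] [Algebra O R]
    (S : Submodule O (PowerSeries O))
    (D : Submodule O (PowerSeries O))
    (hD : ∀ f : PowerSeries O, f ∈ D ↔ ∃ t : ℕ, π ^ t • f ∈ S) :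
    ∃ g : (R ⊗[O] D) →ₗ[R] PowerSeries R,
      (∀ (r : R) (f : D),
        g (r ⊗ₜ[O] f) = r • PowerSeries.map (algebraMap O R) (f : PowerSeries O)) ∧
      Function.Injective g ∧
      LinearMap.range g =
        Submodule.span R (PowerSeries.map (algebraMap O R) '' (D : Set (PowerSeries O))) := by
  classical
  set T : D →ₗ[O] PowerSeries R := (mpL O R).comp D.subtype with hT
  refine ⟨T.liftBaseChange R, ?_, ?_, ?_⟩
  · intro r f
    rw [LinearMap.liftBaseChange_tmul]
    rfl
  · have hker : ∀ z : R ⊗[O] D, T.liftBaseChange R z = 0 → z = 0 := by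
      intro z hgz
      obtain ⟨s, hs⟩ := TensorProduct.exists_finset z
      set e := s.equivFin with hdefe
      have hz2 : z = ∑ i : Fin s.card, (e.symm i).1.1 ⊗ₜ[O] (e.symm i).1.2 := by
        rw [hs, ← Finset.sum_attach s (fun p => p.1 ⊗ₜ[O] p.2)]
        exact (Equiv.sum_comp e.symm (fun p : {x // x ∈ s} => p.1.1 ⊗ₜ[O] p.1.2)).symm
      set f : Fin s.card → PowerSeries O := fun i => ((e.symm i).1.2 : PowerSeries O) with hdeff
      have hf : ∀ i, f i ∈ D := fun i => ((e.symm i).1.2).2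
      set r : Fin s.card → R := fun i => (e.symm i).1.1 with hdefr
      have hrel : ∑ i, r i • PowerSeries.map (algebraMap O R) (f i) = 0 := by
        rw [← hgz, hz2, map_sum]
        refine Finset.sum_congr rfl fun i _ => ?_
        rw [LinearMap.liftBaseChange_tmul]
        rfl
      have hc := key2 hπ hD s.card f hf r hrel
      rw [hz2]
      calc ∑ i : Fin s.card, (e.symm i).1.1 ⊗ₜ[O] (e.symm i).1.2
          = ∑ i, r i ⊗ₜ[O] (⟨f i, hf i⟩ : D) := by
            exact Finset.sum_congr rfl fun i _ => rfl
        _ = 0 := hc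
    intro z₁ z₂ hz12
    have h0 : T.liftBaseChange R (z₁ - z₂) = 0 := by rw [map_sub, hz12, sub_self]
    exact sub_eq_zero.mp (hker _ h0)
  · apply le_antisymm
    · rintro _ ⟨z, rfl⟩
      induction z using TensorProduct.induction_on with
      | zero => simp
      | tmul a d =>
        rw [LinearMap.liftBaseChange_tmul]
        exact Submodule.smul_mem _ _ (Submodule.subset_span ⟨(d : PowerSeries O), d.2, rfl⟩)
      | add u v hu hv =>
        rw [map_add]
        exact Submodule.add_mem _ hu hv
    · rw [Submodule.span_le]
      rintro _ ⟨fo, hfo, rfl⟩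
      rw [SetLike.mem_coe, LinearMap.mem_range]
      exact ⟨(1 : R) ⊗ₜ[O] (⟨fo, hfo⟩ : D),
        by rw [LinearMap.liftBaseChange_tmul, one_smul]; rfl⟩
end

section
/- Let p be a prime, let O be a discrete valuation ring with uniformiser π such that p = u·π^e for some unit u of O and some integer e ≥ 1, and suppose that the canonical ring homomorphism ℤ → O/(π) is surjective (i.e., the residue field of O is 𝔽_p). Set R = O/(π^{e+1}). Then every element of R of the form 1 + p·c with c ∈ R lies in the image of the canonical ring homomorphism ℤ → R; equivalently, since p^2 = 0 in R, every element of 1 + pR lies in the image of the induced ring homomorphism ℤ/p^2ℤ → R. -/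
/-- Let `p` be a prime, `O` a discrete valuation ring with uniformiser `π`
such that `p = u·π^e` (`u` a unit, `e ≥ 1`), and with residue field `𝔽_p` (i.e. the
canonical map `ℤ → O/(π)` is surjective). Set `R = O/(π^{e+1})`. Then every element of
`R` of the form `1 + p·c` lies in the image of the canonical map `ℤ → R`. -/
theorem stmt_7 (p : ℕ) (hp : p.Prime) (O : Type*) [CommRing O] [IsDomain O]
    [IsDiscreteValuationRing O]
    (π : O) (hπ : Irreducible π)
    (e : ℕ) (he : 1 ≤ e) (u : O) (hu : IsUnit u) (hpu : (p : O) = u * π ^ e)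
    (hres : Function.Surjective (Int.cast : ℤ → O ⧸ Ideal.span {π})) :
    ∀ c : O ⧸ Ideal.span {π ^ (e + 1)},
      ∃ m : ℤ, (m : O ⧸ Ideal.span {π ^ (e + 1)}) =
        1 + (p : O ⧸ Ideal.span {π ^ (e + 1)}) * c := by
  intro c
  obtain ⟨x, rfl⟩ := Ideal.Quotient.mk_surjective c
  obtain ⟨m, hm⟩ := hres (Ideal.Quotient.mk _ x)
  have hmem : (m : O) - x ∈ Ideal.span {π} := by
    rw [← Ideal.Quotient.eq]
    simpa using hm
  obtain ⟨t, ht⟩ := Ideal.mem_span_singleton'.mp hmem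
  refine ⟨1 + p * m, ?_⟩
  have h1 : ((1 + p * m : ℤ) : O ⧸ Ideal.span {π ^ (e + 1)})
      = Ideal.Quotient.mk _ ((1 + p * m : ℤ) : O) := by
    push_cast
    simp
  rw [h1, show (1 : O ⧸ Ideal.span {π ^ (e + 1)}) +
      (p : O ⧸ Ideal.span {π ^ (e + 1)}) * Ideal.Quotient.mk _ x
      = Ideal.Quotient.mk _ (1 + (p : O) * x) by simp]
  rw [Ideal.Quotient.eq]
  refine Ideal.mem_span_singleton'.mpr ⟨u * t, ?_⟩
  push_cast
  have : ((m : O) : O) - x = t * π := ht ▸ rfl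
  calc u * t * π ^ (e + 1) = (u * π ^ e) * (t * π) := by ring
    _ = (p : O) * ((m : O) - x) := by rw [← hpu, ht]
    _ = 1 + (p : O) * (m : O) - (1 + (p : O) * x) := by ring
end
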